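/- Let a, b > 0, set α² = a² + 3b², β² = 2a², l = 2ab²/(a² + 3b²), and k = 2a²(a⁴ + 7a²b² + 10b⁴)/((a² + b²)(a² + 3b²)). Consider the triangle in ℝ² with vertices A' = (0, a − l), B' = (−b, −l), C' = (b, −l). Then a point P = (x, y) satisfies W(P) = k if and only if x²/α² + y²/β² = 1; that is, the ellipse x²/(a² + 3b²) + y²/(2a²) = 1 is exactly the locus S_k(Δ A'B'C') of points with constant sum k of squared distances from the sides of this triangle. -/

import Mathlib

noncomputable section

/-- The point `(x, y)` of the Euclidean plane `ℝ²`. -/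
def pt (x y : ℝ) : EuclideanSpace ℝ (Fin 2) :=
  (WithLp.equiv 2 (Fin 2 → ℝ)).symm ![x, y]

/-- The line through `X` and `Y`, i.e. the affine span of `{X, Y}`, as a set. -/
def lineThrough (X Y : EuclideanSpace ℝ (Fin 2)) : Set (EuclideanSpace ℝ (Fin 2)) :=
  (affineSpan ℝ {X, Y} : AffineSubspace ℝ (EuclideanSpace ℝ (Fin 2)))

/-- The distance sum function of the triangle `ABC`:
`V(P) = dist(P, line BC) + dist(P, line CA) + dist(P, line AB)`. -/
def vSum (A B C P : EuclideanSpace ℝ (Fin 2)) : ℝ :=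
  Metric.infDist P (lineThrough B C) + Metric.infDist P (lineThrough C A) +
    Metric.infDist P (lineThrough A B)

/-- The squared-distance sum function of the triangle `ABC`:
`W(P) = dist(P, line BC)² + dist(P, line CA)² + dist(P, line AB)²`. -/
def wSum (A B C P : EuclideanSpace ℝ (Fin 2)) : ℝ :=
  Metric.infDist P (lineThrough B C) ^ 2 + Metric.infDist P (lineThrough C A) ^ 2 +
    Metric.infDist P (lineThrough A B) ^ 2

lemma pt_eta (P : EuclideanSpace ℝ (Fin 2)) : pt (P 0) (P 1) = P := by
  ext i; fin_cases i <;> rfl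

lemma dist_pt (p q r s : ℝ) :
    dist (pt p q) (pt r s) = Real.sqrt ((p - r) ^ 2 + (q - s) ^ 2) := by
  rw [EuclideanSpace.dist_eq]
  congr 1
  simp [Fin.sum_univ_two, pt, Real.dist_eq, sq_abs]

lemma comb_pt (t x1 y1 x2 y2 : ℝ) :
    t • (pt x2 y2 - pt x1 y1) + pt x1 y1 = pt (t * (x2 - x1) + x1) (t * (y2 - y1) + y1) := by
  ext i; fin_cases i <;> rfl

lemma mem_line (X Y Q : EuclideanSpace ℝ (Fin 2)) (h : Q ∈ lineThrough X Y) :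
    ∃ t : ℝ, Q = t • (Y - X) + X := by
  have h2 : (Q - X) +ᵥ X ∈ affineSpan ℝ ({X, Y} : Set (EuclideanSpace ℝ (Fin 2))) := by
    simpa [lineThrough] using h
  rw [vadd_left_mem_affineSpan_pair] at h2
  obtain ⟨r, hr⟩ := h2
  refine ⟨r, ?_⟩
  have : r • (Y - X) = Q - X := by simpa using hr
  rw [this]; abel

lemma line_mem (X Y : EuclideanSpace ℝ (Fin 2)) (t : ℝ) :
    t • (Y - X) + X ∈ lineThrough X Y := by
  have := smul_vsub_vadd_mem_affineSpan_pair t X Y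
  simpa [lineThrough] using this

lemma cauchy2 (u1 u2 d1 d2 : ℝ) :
    (u1 * d2 - u2 * d1) ^ 2 ≤ (u1 ^ 2 + u2 ^ 2) * (d1 ^ 2 + d2 ^ 2) := by
  nlinarith [sq_nonneg (u1 * d1 + u2 * d2)]

lemma infDist_line (x1 y1 x2 y2 p q : ℝ) (h : 0 < (x2 - x1) ^ 2 + (y2 - y1) ^ 2) :
    Metric.infDist (pt p q) (lineThrough (pt x1 y1) (pt x2 y2))
      = |(p - x1) * (y2 - y1) - (q - y1) * (x2 - x1)|
        / Real.sqrt ((x2 - x1) ^ 2 + (y2 - y1) ^ 2) := by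
  set D : ℝ := (x2 - x1) ^ 2 + (y2 - y1) ^ 2 with hD
  set c : ℝ := (p - x1) * (y2 - y1) - (q - y1) * (x2 - x1) with hc
  have hsD : 0 < Real.sqrt D := Real.sqrt_pos.2 h
  have key : ∀ t : ℝ, |c| / Real.sqrt D ≤
      Real.sqrt ((p - (t * (x2 - x1) + x1)) ^ 2 + (q - (t * (y2 - y1) + y1)) ^ 2) := by
    intro t
    set E : ℝ := (p - (t * (x2 - x1) + x1)) ^ 2 + (q - (t * (y2 - y1) + y1)) ^ 2 with hE
    have hcs : c ^ 2 ≤ E * D := by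
      have hcc : c = (p - (t * (x2 - x1) + x1)) * (y2 - y1)
          - (q - (t * (y2 - y1) + y1)) * (x2 - x1) := by rw [hc]; ring
      rw [hcc, hE, hD]
      exact cauchy2 (p - (t * (x2 - x1) + x1)) (q - (t * (y2 - y1) + y1)) (x2 - x1) (y2 - y1)
    have hEnn : (0:ℝ) ≤ E := by positivity
    calc |c| / Real.sqrt D = Real.sqrt (c ^ 2) / Real.sqrt D := by
          rw [Real.sqrt_sq_eq_abs]
      _ ≤ Real.sqrt (E * D) / Real.sqrt D := by
          gcongr
      _ = Real.sqrt E := by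
          rw [Real.sqrt_mul hEnn, mul_div_assoc, div_self hsD.ne', mul_one]
  have hne : (lineThrough (pt x1 y1) (pt x2 y2)).Nonempty :=
    ⟨pt x1 y1, by simpa [lineThrough] using left_mem_affineSpan_pair ℝ (pt x1 y1) (pt x2 y2)⟩
  apply le_antisymm
  · -- use foot point
    set t : ℝ := ((p - x1) * (x2 - x1) + (q - y1) * (y2 - y1)) / D with ht
    have hmem := line_mem (pt x1 y1) (pt x2 y2) t
    rw [comb_pt] at hmem
    refine le_trans (Metric.infDist_le_dist_of_mem hmem) ?_
    rw [dist_pt]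
    have hEq : (p - (t * (x2 - x1) + x1)) ^ 2 + (q - (t * (y2 - y1) + y1)) ^ 2
        = c ^ 2 / D := by
      have htD : t * ((x2 - x1) ^ 2 + (y2 - y1) ^ 2)
          = (p - x1) * (x2 - x1) + (q - y1) * (y2 - y1) := by
        rw [ht]; exact div_mul_cancel₀ _ h.ne'
      rw [eq_div_iff h.ne', hc, hD]
      linear_combination (t * ((x2 - x1) ^ 2 + (y2 - y1) ^ 2)
        - ((p - x1) * (x2 - x1) + (q - y1) * (y2 - y1))) * htD
    rw [hEq, Real.sqrt_div (sq_nonneg c) D, Real.sqrt_sq_eq_abs]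
  · refine le_of_not_gt fun hlt => ?_
    rw [Metric.infDist_lt_iff hne] at hlt
    obtain ⟨Q, hQ, hd⟩ := hlt
    obtain ⟨t, rfl⟩ := mem_line _ _ _ hQ
    rw [comb_pt, dist_pt] at hd
    exact absurd hd (not_lt.2 (key t))

lemma infDist_line_sq (x1 y1 x2 y2 p q : ℝ) (h : 0 < (x2 - x1) ^ 2 + (y2 - y1) ^ 2) :
    Metric.infDist (pt p q) (lineThrough (pt x1 y1) (pt x2 y2)) ^ 2
      = ((p - x1) * (y2 - y1) - (q - y1) * (x2 - x1)) ^ 2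
        / ((x2 - x1) ^ 2 + (y2 - y1) ^ 2) := by
  rw [infDist_line x1 y1 x2 y2 p q h, div_pow, sq_abs, Real.sq_sqrt h.le]

/-- **Theorem 3(b).** With `l = 2ab²/(a²+3b²)` and
`k = 2a²(a⁴+7a²b²+10b⁴)/((a²+b²)(a²+3b²))`, the locus of points with sum of squared
distances `k` from the sides of the triangle `A'(0, a−l)`, `B'(−b, −l)`, `C'(b, −l)` is
exactly the ellipse `x²/(a²+3b²) + y²/(2a²) = 1`. -/
theorem stmt_13 (a b : ℝ) (ha : 0 < a) (hb : 0 < b) :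
    ∀ P : EuclideanSpace ℝ (Fin 2),
      wSum (pt 0 (a - 2 * a * b ^ 2 / (a ^ 2 + 3 * b ^ 2)))
          (pt (-b) (-(2 * a * b ^ 2 / (a ^ 2 + 3 * b ^ 2))))
          (pt b (-(2 * a * b ^ 2 / (a ^ 2 + 3 * b ^ 2)))) P
        = 2 * a ^ 2 * (a ^ 4 + 7 * a ^ 2 * b ^ 2 + 10 * b ^ 4)
            / ((a ^ 2 + b ^ 2) * (a ^ 2 + 3 * b ^ 2)) ↔
      (P 0) ^ 2 / (a ^ 2 + 3 * b ^ 2) + (P 1) ^ 2 / (2 * a ^ 2) = 1 := by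
  intro P
  obtain ⟨p, q, rfl⟩ : ∃ p q, P = pt p q := ⟨P 0, P 1, (pt_eta P).symm⟩
  have hp0 : (pt p q) 0 = p := rfl
  have hp1 : (pt p q) 1 = q := rfl
  rw [hp0, hp1]
  set l : ℝ := 2 * a * b ^ 2 / (a ^ 2 + 3 * b ^ 2) with hl
  have hab2 : (0:ℝ) < a ^ 2 + b ^ 2 := by positivity
  have hab3 : (0:ℝ) < a ^ 2 + 3 * b ^ 2 := by positivity
  have hd1 : (0:ℝ) < (b - -b) ^ 2 + (-l - -l) ^ 2 := by
    have : (b - -b) ^ 2 + (-l - -l) ^ 2 = 4 * b ^ 2 := by ring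
    rw [this]; positivity
  have hd2 : (0:ℝ) < (0 - b) ^ 2 + (a - l - -l) ^ 2 := by
    have : (0 - b) ^ 2 + (a - l - -l) ^ 2 = a ^ 2 + b ^ 2 := by ring
    rw [this]; positivity
  have hd3 : (0:ℝ) < (-b - 0) ^ 2 + (-l - (a - l)) ^ 2 := by
    have : (-b - 0) ^ 2 + (-l - (a - l)) ^ 2 = a ^ 2 + b ^ 2 := by ring
    rw [this]; positivity
  rw [wSum, infDist_line_sq (-b) (-l) b (-l) p q hd1,
    infDist_line_sq b (-l) 0 (a - l) p q hd2,
    infDist_line_sq 0 (a - l) (-b) (-l) p q hd3]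
  -- clean up the three squared distances
  have e1 : ((p - -b) * (-l - -l) - (q - -l) * (b - -b)) ^ 2
      / ((b - -b) ^ 2 + (-l - -l) ^ 2) = (q + l) ^ 2 := by
    have h4 : (b - -b) ^ 2 + (-l - -l) ^ 2 = 4 * b ^ 2 := by ring
    rw [h4]
    rw [div_eq_iff (by positivity : (4:ℝ) * b ^ 2 ≠ 0)]
    ring
  have e2 : ((p - b) * (a - l - -l) - (q - -l) * (0 - b)) ^ 2
      / ((0 - b) ^ 2 + (a - l - -l) ^ 2)
      = (a * (p - b) + b * (q + l)) ^ 2 / (a ^ 2 + b ^ 2) := by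
    have h4 : (0 - b) ^ 2 + (a - l - -l) ^ 2 = a ^ 2 + b ^ 2 := by ring
    rw [h4]
    congr 1
    ring
  have e3 : ((p - 0) * (-l - (a - l)) - (q - (a - l)) * (-b - 0)) ^ 2
      / ((-b - 0) ^ 2 + (-l - (a - l)) ^ 2)
      = (a * p - b * (q - a + l)) ^ 2 / (a ^ 2 + b ^ 2) := by
    have h4 : (-b - 0) ^ 2 + (-l - (a - l)) ^ 2 = a ^ 2 + b ^ 2 := by ring
    rw [h4]
    congr 1
    ring
  rw [e1, e2, e3]
  have key : (q + l) ^ 2 + (a * (p - b) + b * (q + l)) ^ 2 / (a ^ 2 + b ^ 2)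
        + (a * p - b * (q - a + l)) ^ 2 / (a ^ 2 + b ^ 2)
        - 2 * a ^ 2 * (a ^ 4 + 7 * a ^ 2 * b ^ 2 + 10 * b ^ 4)
            / ((a ^ 2 + b ^ 2) * (a ^ 2 + 3 * b ^ 2))
      = (2 * a ^ 2 * (a ^ 2 + 3 * b ^ 2) / (a ^ 2 + b ^ 2))
        * (p ^ 2 / (a ^ 2 + 3 * b ^ 2) + q ^ 2 / (2 * a ^ 2) - 1) := by
    rw [hl]
    field_simp
    ring
  have hC : (0:ℝ) < 2 * a ^ 2 * (a ^ 2 + 3 * b ^ 2) / (a ^ 2 + b ^ 2) := by positivity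
  constructor
  · intro h
    have h0 : (2 * a ^ 2 * (a ^ 2 + 3 * b ^ 2) / (a ^ 2 + b ^ 2))
        * (p ^ 2 / (a ^ 2 + 3 * b ^ 2) + q ^ 2 / (2 * a ^ 2) - 1) = 0 := by
      rw [← key]; linarith
    rcases mul_eq_zero.1 h0 with h1 | h1
    · exact absurd h1 hC.ne'
    · linarith
  · intro h
    have h0 : p ^ 2 / (a ^ 2 + 3 * b ^ 2) + q ^ 2 / (2 * a ^ 2) - 1 = 0 := by linarith
    rw [h0, mul_zero] at key
    linarith
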